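/- The tensor product over R of two Azumaya R-algebras is again an Azumaya R-algebra. -/

import Mathlib

open TensorProduct in
/-- The canonical map `A ⊗[R] Aᵐᵒᵖ →ₗ[R] Module.End R A`, sending `a ⊗ b` to
`x ↦ a * x * b.unop`. -/
noncomputable def mulLeftRight (R A : Type*) [CommRing R] [Ring A] [Algebra R A] :
    A ⊗[R] Aᵐᵒᵖ →ₗ[R] Module.End R A :=
  TensorProduct.lift <|
    LinearMap.mk₂ R
      (fun a b => (LinearMap.mulRight R b.unop) ∘ₗ (LinearMap.mulLeft R a))
      (fun a a' b => by ext x; simp [add_mul, mul_add])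
      (fun r a b => by ext x; simp [smul_mul_assoc, mul_smul_comm])
      (fun a b b' => by ext x; simp [add_mul, mul_add])
      (fun r a b => by ext x; simp [smul_mul_assoc, mul_smul_comm])

/-- An `R`-algebra `A` is *Azumaya* if it is a finitely generated projective faithful
`R`-module and the canonical map `A ⊗[R] Aᵐᵒᵖ → Module.End R A`,
`a ⊗ b ↦ (x ↦ a * x * b)`, is bijective. -/
def IsAzumayaDef (R A : Type*) [CommRing R] [Ring A] [Algebra R A] : Prop :=
  Module.Finite R A ∧ Module.Projective R A ∧ FaithfulSMul R A ∧
    Function.Bijective (mulLeftRight R A)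

open TensorProduct

@[simp] lemma mulLeftRight_tmul_apply {R A : Type*} [CommRing R] [Ring A] [Algebra R A]
    (a : A) (b : Aᵐᵒᵖ) (x : A) :
    mulLeftRight R A (a ⊗ₜ[R] b) x = a * x * b.unop := rfl

section retract
variable (R : Type*) [CommRing R]
variable {M N F G : Type*}
  [AddCommGroup M] [Module R M] [AddCommGroup N] [Module R N]
  [AddCommGroup F] [Module R F] [AddCommGroup G] [Module R G]

/-- Conjugation by a pair of maps, as a linear map between endomorphism modules. -/
def conjLM (i : M →ₗ[R] F) (p : F →ₗ[R] M) : Module.End R M →ₗ[R] Module.End R F where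
  toFun f := i ∘ₗ f ∘ₗ p
  map_add' f g := by ext x; simp
  map_smul' r f := by ext x; simp

@[simp] lemma conjLM_apply (i : M →ₗ[R] F) (p : F →ₗ[R] M) (f : Module.End R M) (x : F) :
    conjLM R i p f x = i (f (p x)) := rfl

/-- naturality square for `homTensorHomMap` under conjugation -/
lemma homTensorHomMap_conj_square
    (i : M →ₗ[R] F) (p : F →ₗ[R] M) (j : N →ₗ[R] G) (q : G →ₗ[R] N)
    (z : Module.End R M ⊗[R] Module.End R N) :
    TensorProduct.homTensorHomMap (RingHom.id R) F G F G
        (TensorProduct.map (conjLM R i p) (conjLM R j q) z)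
      = conjLM R (TensorProduct.map i j) (TensorProduct.map p q)
          (TensorProduct.homTensorHomMap (RingHom.id R) M N M N z) := by
  have : (TensorProduct.homTensorHomMap (RingHom.id R) F G F G) ∘ₗ
      (TensorProduct.map (conjLM R i p) (conjLM R j q))
      = (conjLM R (TensorProduct.map i j) (TensorProduct.map p q)) ∘ₗ
        (TensorProduct.homTensorHomMap (RingHom.id R) M N M N) := by
    apply TensorProduct.ext'
    intro f g
    apply TensorProduct.ext'
    intro x y
    simp [TensorProduct.homTensorHomMap_apply]
  exact DFunLike.congr_fun this z

theorem homTensorHomMap_end_bijective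
    [Module.Finite R M] [Module.Projective R M]
    [Module.Finite R N] [Module.Projective R N] :
    Function.Bijective (TensorProduct.homTensorHomMap (RingHom.id R) M N M N) := by
  obtain ⟨m, fM, gM, _, _, hM⟩ := Module.Finite.exists_comp_eq_id_of_projective R M
  obtain ⟨n, fN, gN, _, _, hN⟩ := Module.Finite.exists_comp_eq_id_of_projective R N
  have hM' : ∀ x, fM (gM x) = x := fun x => by
    simpa using DFunLike.congr_fun hM x
  have hN' : ∀ x, fN (gN x) = x := fun x => by
    simpa using DFunLike.congr_fun hN x
  set F := Fin m → R
  set G := Fin n → R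
  have hFG : Function.Bijective (TensorProduct.homTensorHomMap (RingHom.id R) F G F G) := by
    rw [← homTensorHomEquiv_toLinearMap]
    exact (homTensorHomEquiv R F G F G).bijective
  set s : Module.End R M ⊗[R] Module.End R N →ₗ[R] Module.End R F ⊗[R] Module.End R G :=
    TensorProduct.map (conjLM R gM fM) (conjLM R gN fN) with hs
  set r : Module.End R F ⊗[R] Module.End R G →ₗ[R] Module.End R M ⊗[R] Module.End R N :=
    TensorProduct.map (conjLM R fM gM) (conjLM R fN gN) with hr
  have hrs : ∀ z, r (s z) = z := by
    intro z
    have : r ∘ₗ s = LinearMap.id := by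
      rw [hr, hs, ← TensorProduct.map_comp]
      have e1 : (conjLM R fM gM) ∘ₗ (conjLM R gM fM) = LinearMap.id := by
        ext f x; simp [hM']
      have e2 : (conjLM R fN gN) ∘ₗ (conjLM R gN fN) = LinearMap.id := by
        ext g x; simp [hN']
      rw [e1, e2, TensorProduct.map_id]
    exact DFunLike.congr_fun this z
  have sq1 : ∀ z, TensorProduct.homTensorHomMap (RingHom.id R) F G F G (s z)
      = conjLM R (TensorProduct.map gM gN) (TensorProduct.map fM fN)
          (TensorProduct.homTensorHomMap (RingHom.id R) M N M N z) :=
    fun z => homTensorHomMap_conj_square R gM fM gN fN z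
  have sq2 : ∀ z, TensorProduct.homTensorHomMap (RingHom.id R) M N M N (r z)
      = conjLM R (TensorProduct.map fM fN) (TensorProduct.map gM gN)
          (TensorProduct.homTensorHomMap (RingHom.id R) F G F G z) :=
    fun z => homTensorHomMap_conj_square R fM gM fN gN z
  have hST : ∀ φ : Module.End R (M ⊗[R] N),
      conjLM R (TensorProduct.map fM fN) (TensorProduct.map gM gN)
        (conjLM R (TensorProduct.map gM gN) (TensorProduct.map fM fN) φ) = φ := by
    intro φ
    refine LinearMap.ext fun z => ?_
    simp only [conjLM_apply]
    have key : ∀ w : M ⊗[R] N, TensorProduct.map fM fN (TensorProduct.map gM gN w) = w := by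
      intro w
      have : (TensorProduct.map fM fN) ∘ₗ (TensorProduct.map gM gN) = LinearMap.id := by
        rw [← TensorProduct.map_comp, hM, hN, TensorProduct.map_id]
      exact DFunLike.congr_fun this w
    rw [key, key]
  constructor
  · intro x y hxy
    have : s x = s y := hFG.injective (by rw [sq1, sq1, hxy])
    calc x = r (s x) := (hrs x).symm
    _ = r (s y) := by rw [this]
    _ = y := hrs y
  · intro φ
    obtain ⟨z, hz⟩ := hFG.surjective
      (conjLM R (TensorProduct.map gM gN) (TensorProduct.map fM fN) φ)
    refine ⟨r z, ?_⟩
    rw [sq2, hz, hST]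

end retract

section faithful
variable (R B : Type*) [CommRing R] [Ring B] [Algebra R B]

/-- A finite projective faithful algebra admits a linear functional sending `1` to `1`. -/
theorem exists_linear_functional_one [Module.Finite R B] [Module.Projective R B]
    [FaithfulSMul R B] : ∃ ψ : B →ₗ[R] R, ψ 1 = 1 := by
  obtain ⟨n, f, g, _, _, hfg⟩ := Module.Finite.exists_comp_eq_id_of_projective R B
  have hfg' : ∀ x, f (g x) = x := fun x => by simpa using DFunLike.congr_fun hfg x
  -- the "trace ideal style" submodule of R
  set T : Submodule R R :=
    { carrier := {s : R | ∃ ψ : B →ₗ[R] R, ψ 1 = s}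
      add_mem' := by rintro a b ⟨ψ, hψ⟩ ⟨χ, hχ⟩; exact ⟨ψ + χ, by simp [hψ, hχ]⟩
      zero_mem' := ⟨0, rfl⟩
      smul_mem' := by rintro c a ⟨ψ, hψ⟩; exact ⟨c • ψ, by simp [hψ]⟩ } with hT
  -- the trace ideal
  set I : Ideal R := Ideal.span (⋃ i : Fin n, Set.range fun b => g b i) with hI
  have hIT : I ≤ T.restrictScalars R := by
    rw [hI, Ideal.span_le]
    rintro s hs
    simp only [Set.mem_iUnion, Set.mem_range] at hs
    obtain ⟨i, b, rfl⟩ := hs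
    exact ⟨(LinearMap.proj i ∘ₗ g) ∘ₗ LinearMap.mulRight R b, by simp⟩
  have hBI : (⊤ : Submodule R B) ≤ I • ⊤ := by
    intro b _
    have hgb : g b = ∑ i : Fin n, g b i • (Pi.single i 1 : Fin n → R) := by
      ext j
      simp [Finset.sum_apply, Pi.single_apply]
    have hb : b = ∑ i : Fin n, g b i • f (Pi.single i 1 : Fin n → R) := by
      conv_lhs => rw [← hfg' b, hgb]
      rw [map_sum]
      simp
    rw [hb]
    refine Submodule.sum_mem _ fun i _ => Submodule.smul_mem_smul ?_ trivial
    exact Ideal.subset_span (Set.mem_iUnion.2 ⟨i, ⟨b, rfl⟩⟩)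
  obtain ⟨r, hr1, hr0⟩ :=
    Submodule.exists_sub_one_mem_and_smul_eq_zero_of_fg_of_le_smul I ⊤
      (Module.Finite.fg_top (R := R) (M := B)) hBI
  have hr : r = 0 := by
    refine FaithfulSMul.eq_of_smul_eq_smul (M := R) (α := B) fun b => ?_
    rw [zero_smul]
    exact hr0 b trivial
  have h1 : (1 : R) ∈ I := by
    have := I.neg_mem hr1
    simpa [hr] using this
  obtain ⟨ψ, hψ⟩ := hIT h1
  exact ⟨ψ, hψ⟩

end faithful

open TensorProduct in
/-- The tensor product over `R` of two Azumaya `R`-algebras is again Azumaya. -/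
theorem isAzumaya_tensorProduct (R : Type*) [CommRing R]
    (A B : Type*) [Ring A] [Algebra R A] [Ring B] [Algebra R B]
    (hA : IsAzumayaDef R A) (hB : IsAzumayaDef R B) :
    IsAzumayaDef R (A ⊗[R] B) := by
  obtain ⟨hAf, hAp, hAs, hAb⟩ := hA
  obtain ⟨hBf, hBp, hBs, hBb⟩ := hB
  haveI := hAf; haveI := hAp; haveI := hAs
  haveI := hBf; haveI := hBp; haveI := hBs
  refine ⟨inferInstance, inferInstance, ?_, ?_⟩
  · -- faithfulness
    obtain ⟨ψ, hψ⟩ := exists_linear_functional_one R B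
    set χ : A ⊗[R] B →ₗ[R] A :=
      (TensorProduct.rid R A).toLinearMap ∘ₗ (LinearMap.lTensor A ψ) with hχ
    have hχ1 : ∀ a : A, χ (a ⊗ₜ[R] 1) = a := by
      intro a; simp [hχ, hψ]
    constructor
    intro r s h
    refine FaithfulSMul.eq_of_smul_eq_smul (M := R) (α := A) fun a => ?_
    have := h (a ⊗ₜ[R] (1 : B))
    have h2 : χ (r • a ⊗ₜ[R] (1:B)) = χ (s • a ⊗ₜ[R] (1:B)) := by rw [this]
    rw [map_smul, map_smul, hχ1] at h2
    simpa using h2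
  · -- bijectivity
    set e : (A ⊗[R] B) ⊗[R] (A ⊗[R] B)ᵐᵒᵖ ≃ₗ[R] (A ⊗[R] Aᵐᵒᵖ) ⊗[R] (B ⊗[R] Bᵐᵒᵖ) :=
      (TensorProduct.congr (LinearEquiv.refl R (A ⊗[R] B))
        (Algebra.TensorProduct.opAlgEquiv R R A B).symm.toLinearEquiv) ≪≫ₗ
        TensorProduct.tensorTensorTensorComm R A B Aᵐᵒᵖ Bᵐᵒᵖ with he
    have key : mulLeftRight R (A ⊗[R] B) =
        (TensorProduct.homTensorHomMap (RingHom.id R) A B A B) ∘ₗ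
          (TensorProduct.map (mulLeftRight R A) (mulLeftRight R B)) ∘ₗ e.toLinearMap := by
      apply TensorProduct.ext'
      intro x y
      induction y using MulOpposite.rec' with
      | _ z =>
      induction z with
      | zero =>
          rw [show MulOpposite.op (0 : A ⊗[R] B) = 0 from rfl, TensorProduct.tmul_zero,
            map_zero, map_zero]
      | add z1 z2 h1 h2 =>
          rw [show MulOpposite.op (z1 + z2) = MulOpposite.op z1 + MulOpposite.op z2 from rfl,
            TensorProduct.tmul_add, map_add, map_add, h1, h2]
      | tmul a' b' =>
      induction x with
      | zero => rw [TensorProduct.zero_tmul, map_zero, map_zero]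
      | add x1 x2 h1 h2 => rw [TensorProduct.add_tmul, map_add, map_add, h1, h2]
      | tmul a b =>
          apply TensorProduct.ext'
          intro u v
          simp only [LinearMap.comp_apply, LinearEquiv.coe_coe, he,
            LinearEquiv.trans_apply, TensorProduct.congr_tmul, LinearEquiv.refl_apply,
            AlgEquiv.toLinearEquiv_apply, Algebra.TensorProduct.opAlgEquiv_symm_tmul,
            TensorProduct.tensorTensorTensorComm_tmul, TensorProduct.map_tmul,
            TensorProduct.homTensorHomMap_apply, mulLeftRight_tmul_apply,
            MulOpposite.unop_op, Algebra.TensorProduct.tmul_mul_tmul]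
    rw [key]
    have h1 : Function.Bijective (TensorProduct.map (mulLeftRight R A) (mulLeftRight R B)) := by
      have : TensorProduct.map (mulLeftRight R A) (mulLeftRight R B)
          = (TensorProduct.congr (LinearEquiv.ofBijective _ hAb)
              (LinearEquiv.ofBijective _ hBb)).toLinearMap := by
        apply TensorProduct.ext'
        intro x y
        simp [TensorProduct.congr_tmul]
      rw [this]
      exact (TensorProduct.congr _ _).bijective
    exact ((homTensorHomMap_end_bijective R).comp h1).comp e.bijective
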